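/- Let ℓ > 0 be a real number and let s be a complex number with Re(s) > 0 and Re(s²) > 0. Then the function t ↦ e^{−t s²} · t^{−1/2} · e^{−ℓ²/(4t)} is integrable on (0,∞) and ∫₀^∞ e^{−t s²} t^{−1/2} e^{−ℓ²/(4t)} dt = (√π / s) · e^{−ℓ s}. -/

import Mathlib

open MeasureTheory Set Real Filter Complex Metric


lemma odd_integral_zero {f : ℝ → ℝ} (hf : ∀ x, f (-x) = - f x) : ∫ x : ℝ, f x = 0 := by
  have h := MeasureTheory.integral_neg_eq_self f (volume : Measure ℝ)
  simp only [hf] at h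
  rw [MeasureTheory.integral_neg] at h
  linarith

lemma glasser (a b : ℝ) (ha : 0 < a) (hb : 0 < b) :
    ∫ u in Ioi (0:ℝ), Real.exp (-(a*u - b/u)^2) = Real.sqrt π / (2*a) := by
  set c : ℝ := 4*a*b with hc_def
  have hc : 0 < c := by positivity
  set g : ℝ → ℝ := fun w => (w + Real.sqrt (w^2 + c))/(2*a) with hg_def
  set g' : ℝ → ℝ := fun w => (1 + w / Real.sqrt (w^2 + c))/(2*a) with hg'_def
  have hsqrt_pos : ∀ w : ℝ, 0 < Real.sqrt (w^2 + c) := fun w =>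
    Real.sqrt_pos.mpr (by positivity)
  have hsq : ∀ w : ℝ, Real.sqrt (w^2 + c) ^ 2 = w^2 + c := fun w =>
    Real.sq_sqrt (by positivity)
  have habs : ∀ w : ℝ, |w| < Real.sqrt (w^2 + c) := by
    intro w
    have : Real.sqrt (w^2) < Real.sqrt (w^2 + c) :=
      Real.sqrt_lt_sqrt (sq_nonneg w) (by linarith)
    rwa [Real.sqrt_sq_eq_abs] at this
  have hg_pos : ∀ w : ℝ, 0 < g w := by
    intro w
    have h1 := habs w
    have h2 : -w ≤ |w| := neg_le_abs w
    have h3 : 0 < w + Real.sqrt (w^2 + c) := by linarith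
    exact div_pos h3 (by linarith)
  have hg'_pos : ∀ w : ℝ, 0 < g' w := by
    intro w
    have h1 := habs w
    have h2 : -w ≤ |w| := neg_le_abs w
    have hs := hsqrt_pos w
    have h3 : -1 < w / Real.sqrt (w^2 + c) := by
      rw [lt_div_iff₀ hs]; nlinarith
    exact div_pos (by linarith) (by linarith)
  have hderiv : ∀ w : ℝ, HasDerivAt g (g' w) w := by
    intro w
    have h1 : HasDerivAt (fun w : ℝ => w^2 + c) (2*w) w := by
      simpa using ((hasDerivAt_pow 2 w).add_const c)
    have h2 : HasDerivAt (fun w : ℝ => Real.sqrt (w^2 + c)) (2*w / (2 * Real.sqrt (w^2 + c))) w :=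
      h1.sqrt (by positivity)
    have h3 := ((hasDerivAt_id w).add h2).div_const (2*a)
    convert h3 using 1
    · rfl
    · rfl
    · rfl
    have hs := (hsqrt_pos w).ne'
    simp only [hg'_def]
    field_simp
  have hmono : StrictMono g := by
    apply strictMono_of_deriv_pos
    intro w
    rw [(hderiv w).deriv]
    exact hg'_pos w
  have himg : g '' univ = Ioi (0:ℝ) := by
    apply Set.eq_of_subset_of_subset
    · rintro x ⟨w, -, rfl⟩; exact hg_pos w
    · rintro u (hu : 0 < u)
      refine ⟨a*u - b/u, Set.mem_univ _, ?_⟩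
      have key : Real.sqrt ((a*u - b/u)^2 + c) = a*u + b/u := by
        have h1 : (a*u - b/u)^2 + c = (a*u + b/u)^2 := by
          field_simp; ring
        rw [h1, Real.sqrt_sq (by positivity)]
      simp only [hg_def, key]
      field_simp
      ring
  have hback : ∀ w : ℝ, a * g w - b / g w = w := by
    intro w
    have hu := hg_pos w
    have h2au : 2 * a * g w = w + Real.sqrt (w^2 + c) := by
      simp only [hg_def]; field_simp
    have h4 : (2 * a * g w - w)^2 = w^2 + c := by
      have h' : 2*a*g w - w = Real.sqrt (w^2+c) := by linarith
      rw [h', hsq w]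
    have h5 : a * (g w)^2 - g w * w = b := by nlinarith [hsq w]
    field_simp
    nlinarith
  -- change of variables
  have hcov := integral_image_eq_integral_abs_deriv_smul (MeasurableSet.univ)
      (fun w (_ : w ∈ univ) => (hderiv w).hasDerivWithinAt) (hmono.injective.injOn)
      (fun u => Real.exp (-(a*u - b/u)^2))
  rw [himg] at hcov
  rw [hcov]
  have hcongr : ∀ w : ℝ, |g' w| • Real.exp (-(a * g w - b / g w)^2)
      = (1/(2*a)) * Real.exp (-w^2) + (1/(2*a)) * ((w / Real.sqrt (w^2+c)) * Real.exp (-w^2)) := by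
    intro w
    rw [hback w, abs_of_pos (hg'_pos w)]
    simp only [hg'_def, smul_eq_mul]
    ring
  rw [Measure.restrict_univ]
  simp only [hcongr]
  have hint1 : Integrable (fun w : ℝ => Real.exp (-w^2)) := by
    simpa using integrable_exp_neg_mul_sq (one_pos)
  have hint2 : Integrable (fun w : ℝ => (w / Real.sqrt (w^2+c)) * Real.exp (-w^2)) := by
    apply Integrable.mono' hint1
    · apply Continuous.aestronglyMeasurable
      exact ((continuous_id.div (Real.continuous_sqrt.comp (by continuity))
        (fun w => (hsqrt_pos w).ne')).mul (by continuity))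
    · refine Filter.Eventually.of_forall (fun w => ?_)
      rw [Real.norm_eq_abs, abs_mul, abs_of_pos (Real.exp_pos _)]
      have h1 : |w / Real.sqrt (w^2+c)| ≤ 1 := by
        rw [abs_div, abs_of_pos (hsqrt_pos w)]
        rw [div_le_one (hsqrt_pos w)]
        exact (habs w).le
      nlinarith [Real.exp_pos (-w^2), abs_nonneg (w / Real.sqrt (w^2+c))]
  rw [integral_add (hint1.const_mul _) (hint2.const_mul _), integral_const_mul,
    integral_const_mul]
  have hodd : ∫ w : ℝ, (w / Real.sqrt (w^2+c)) * Real.exp (-w^2) = 0 := by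
    apply odd_integral_zero
    intro x
    simp only [even_two.neg_pow, neg_div]
    ring
  have hgauss : ∫ w : ℝ, Real.exp (-w^2) = Real.sqrt π := by
    have := integral_gaussian 1
    simpa using this
  rw [hodd, hgauss]
  ring



lemma real_case (ℓ : ℝ) (hℓ : 0 < ℓ) (c : ℝ) (hcpos : 0 < c) :
    ∫ t in Ioi (0:ℝ), Real.exp (-(t*c^2)) * (Real.sqrt t)⁻¹ * Real.exp (-ℓ^2/(4*t))
      = Real.sqrt π / c * Real.exp (-(ℓ*c)) := by
  have himg : (fun u : ℝ => u^2) '' Ioi 0 = Ioi (0:ℝ) := by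
    ext x
    constructor
    · rintro ⟨u, hu, rfl⟩; exact pow_pos (show (0:ℝ) < u from hu) 2
    · intro hx
      exact ⟨Real.sqrt x, Real.sqrt_pos.mpr hx, Real.sq_sqrt (le_of_lt hx)⟩
  have hinj : Set.InjOn (fun u : ℝ => u^2) (Ioi 0) := by
    intro u hu v hv h
    simp only at h
    rw [← Real.sqrt_sq (le_of_lt hu), ← Real.sqrt_sq (le_of_lt hv), h]
  have hderiv : ∀ u ∈ Ioi (0:ℝ), HasDerivWithinAt (fun u : ℝ => u^2) (2*u) (Ioi 0) u := by
    intro u _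
    simpa using (hasDerivAt_pow 2 u).hasDerivWithinAt
  have hcov := integral_image_eq_integral_abs_deriv_smul measurableSet_Ioi hderiv hinj
      (fun t => Real.exp (-(t*c^2)) * (Real.sqrt t)⁻¹ * Real.exp (-ℓ^2/(4*t)))
  rw [himg] at hcov
  rw [hcov]
  have hcongr : ∀ u ∈ Ioi (0:ℝ), |2*u| • (Real.exp (-(u^2*c^2)) * (Real.sqrt (u^2))⁻¹ *
      Real.exp (-ℓ^2/(4*u^2)))
      = (2 * Real.exp (-(ℓ*c))) * Real.exp (-(c*u - (ℓ/2)/u)^2) := by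
    intro u hu
    have hu' : 0 < u := hu
    rw [Real.sqrt_sq hu'.le, abs_of_pos (by linarith), smul_eq_mul]
    have h1 : 2 * u * (Real.exp (-(u^2*c^2)) * u⁻¹ * Real.exp (-ℓ^2/(4*u^2)))
        = 2 * (Real.exp (-(u^2*c^2)) * Real.exp (-ℓ^2/(4*u^2))) := by
      field_simp
    rw [h1, ← Real.exp_add, mul_assoc, ← Real.exp_add]
    congr 1
    field_simp
    ring
  rw [setIntegral_congr_fun measurableSet_Ioi hcongr, integral_const_mul,
    glasser c (ℓ/2) hcpos (by linarith)]
  field_simp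

lemma gamma_bound (r δ : ℝ) (hr : 0 < r) (hδ : 0 < δ) :
    IntegrableOn (fun t : ℝ => Real.exp (-(δ*t)) * t ^ (r - 1)) (Ioi 0) := by
  have h0 := Real.GammaIntegral_convergent hr
  have h1 : IntegrableOn (fun x : ℝ => Real.exp (-(δ*x)) * (δ*x) ^ (r - 1)) (Ioi 0) := by
    have h2 := (integrableOn_Ioi_comp_mul_left_iff
      (fun x : ℝ => Real.exp (-x) * x ^ (r - 1)) 0 hδ).mpr
    rw [mul_zero] at h2
    exact h2 h0
  have h3 : IntegrableOn
      (fun x : ℝ => (δ ^ (r - 1))⁻¹ * (Real.exp (-(δ*x)) * (δ*x) ^ (r - 1))) (Ioi 0) :=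
    h1.const_mul _
  apply h3.congr_fun ?_ measurableSet_Ioi
  intro x hx
  have hx' : (0:ℝ) < x := hx
  show (δ ^ (r - 1))⁻¹ * (Real.exp (-(δ*x)) * (δ*x) ^ (r - 1))
      = Real.exp (-(δ*x)) * x ^ (r - 1)
  rw [Real.mul_rpow hδ.le hx'.le]
  have : (0:ℝ) < δ ^ (r-1) := Real.rpow_pos_of_pos hδ _
  field_simp

lemma sqrtinv_bound (δ : ℝ) (hδ : 0 < δ) :
    IntegrableOn (fun t : ℝ => (Real.sqrt t)⁻¹ * Real.exp (-(δ*t))) (Ioi 0) := by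
  apply (gamma_bound (1/2) δ (by norm_num) hδ).congr_fun ?_ measurableSet_Ioi
  intro x hx
  have hx' : (0:ℝ) < x := hx
  show Real.exp (-(δ*x)) * x ^ ((1:ℝ)/2 - 1) = (Real.sqrt x)⁻¹ * Real.exp (-(δ*x))
  rw [show (1:ℝ)/2 - 1 = -(1/2) by norm_num, Real.rpow_neg hx'.le,
    ← Real.sqrt_eq_rpow]
  ring

lemma sqrt_bound (δ : ℝ) (hδ : 0 < δ) :
    IntegrableOn (fun t : ℝ => Real.sqrt t * Real.exp (-(δ*t))) (Ioi 0) := by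
  apply (gamma_bound (3/2) δ (by norm_num) hδ).congr_fun ?_ measurableSet_Ioi
  intro x hx
  have hx' : (0:ℝ) < x := hx
  show Real.exp (-(δ*x)) * x ^ ((3:ℝ)/2 - 1) = Real.sqrt x * Real.exp (-(δ*x))
  rw [show (3:ℝ)/2 - 1 = 1/2 by norm_num, ← Real.sqrt_eq_rpow]
  ring


noncomputable def Fi (ℓ : ℝ) (s : ℂ) (t : ℝ) : ℂ :=
  Complex.exp (-(t : ℂ) * s ^ 2) * ((Real.sqrt t)⁻¹ : ℝ) * (Real.exp (-ℓ ^ 2 / (4 * t)) : ℝ)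

lemma Fi_norm (ℓ : ℝ) (s : ℂ) (t : ℝ) :
    ‖Fi ℓ s t‖ = Real.exp (-(t * (s^2).re)) * (Real.sqrt t)⁻¹ * Real.exp (-ℓ^2/(4*t)) := by
  unfold Fi
  rw [norm_mul, norm_mul]
  have h1 : (-(t:ℂ) * s^2).re = -(t * (s^2).re) := by
    rw [show -(t:ℂ) * s^2 = ((-t : ℝ) : ℂ) * s^2 by push_cast; ring, Complex.re_ofReal_mul]
    ring
  rw [show ‖cexp (-(t:ℂ) * s^2)‖ = Real.exp (-(t * (s^2).re)) by
      rw [Complex.norm_exp, h1],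
    Complex.norm_real, Complex.norm_real, Real.norm_eq_abs, Real.norm_eq_abs,
    _root_.abs_of_nonneg (inv_nonneg.mpr (Real.sqrt_nonneg t)), _root_.abs_of_pos (Real.exp_pos _)]

lemma Fi_meas (ℓ : ℝ) (s : ℂ) :
    AEStronglyMeasurable (Fi ℓ s) (volume.restrict (Ioi 0)) := by
  apply ContinuousOn.aestronglyMeasurable ?_ measurableSet_Ioi
  apply ContinuousOn.mul
  apply ContinuousOn.mul
  · exact (Complex.continuous_exp.comp (by continuity)).continuousOn
  · apply Complex.continuous_ofReal.comp_continuousOn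
    apply ContinuousOn.inv₀ (Real.continuous_sqrt.continuousOn)
    intro t ht
    exact (Real.sqrt_pos.mpr ht).ne'
  · apply Complex.continuous_ofReal.comp_continuousOn
    apply Real.continuous_exp.comp_continuousOn
    apply ContinuousOn.div continuousOn_const ((continuous_const.mul continuous_id).continuousOn)
    intro t ht
    have : (0:ℝ) < t := ht
    show (4:ℝ) * t ≠ 0
    positivity

lemma Fi_integrable (ℓ : ℝ) (s : ℂ) (hs2 : 0 < (s^2).re) :
    IntegrableOn (Fi ℓ s) (Ioi 0) := by
  apply Integrable.mono' (sqrtinv_bound ((s^2).re) hs2) (Fi_meas ℓ s)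
  filter_upwards [ae_restrict_mem measurableSet_Ioi] with t ht
  rw [Fi_norm]
  have h1 : Real.exp (-ℓ^2/(4*t)) ≤ 1 := by
    apply Real.exp_le_one_iff.mpr
    have : (0:ℝ) < t := ht
    rw [neg_div]
    simp only [Left.neg_nonpos_iff]
    positivity
  have h2 : 0 < (Real.sqrt t)⁻¹ := by
    have : (0:ℝ) < t := ht
    simp [Real.sqrt_pos.mpr this]
  calc Real.exp (-(t * (s^2).re)) * (Real.sqrt t)⁻¹ * Real.exp (-ℓ^2/(4*t))
      ≤ Real.exp (-(t * (s^2).re)) * (Real.sqrt t)⁻¹ * 1 := by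
        apply mul_le_mul_of_nonneg_left h1; positivity
    _ = (Real.sqrt t)⁻¹ * Real.exp (-((s^2).re * t)) := by rw [mul_comm t]; ring


noncomputable def Fi' (ℓ : ℝ) (s : ℂ) (t : ℝ) : ℂ :=
  (Complex.exp (-(t : ℂ) * s ^ 2) * (-(t:ℂ) * (2*s))) * ((Real.sqrt t)⁻¹ : ℝ) *
    (Real.exp (-ℓ ^ 2 / (4 * t)) : ℝ)

lemma Fi'_meas (ℓ : ℝ) (s : ℂ) :
    AEStronglyMeasurable (Fi' ℓ s) (volume.restrict (Ioi 0)) := by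
  have h1 : Fi' ℓ s = fun t : ℝ => (-(t:ℂ) * (2*s)) * Fi ℓ s t := by
    funext t; unfold Fi Fi'; ring
  rw [h1]
  apply AEStronglyMeasurable.mul ?_ (Fi_meas ℓ s)
  apply Continuous.aestronglyMeasurable
  continuity

lemma Fi_hasDeriv (ℓ : ℝ) (t : ℝ) (s : ℂ) :
    HasDerivAt (fun s => Fi ℓ s t) (Fi' ℓ s t) s := by
  have h1 : HasDerivAt (fun s : ℂ => -(t:ℂ)*s^2) (-(t:ℂ)*(2*s)) s := by
    have := (hasDerivAt_pow 2 s).const_mul (-(t:ℂ))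
    simpa [mul_comm] using this
  have h2 := h1.cexp
  exact (h2.mul_const _).mul_const _

lemma Fv_hasDeriv (ℓ : ℝ) (hℓ : 0 < ℓ) (s₀ : ℂ) (h2 : 0 < (s₀^2).re) :
    HasDerivAt (fun s => ∫ t in Ioi (0:ℝ), Fi ℓ s t) (∫ t in Ioi (0:ℝ), Fi' ℓ s₀ t) s₀ := by
  set δ := (s₀^2).re / 2 with hδ_def
  have hδ : 0 < δ := by positivity
  set M := ‖s₀‖ + 1 with hM_def
  set V := {s : ℂ | δ < (s^2).re} ∩ ball s₀ 1 with hV_def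
  have hVopen : IsOpen V := by
    apply IsOpen.inter ?_ isOpen_ball
    exact isOpen_lt continuous_const (Complex.continuous_re.comp (continuous_pow 2))
  have hs₀V : s₀ ∈ V := by
    constructor
    · show δ < (s₀^2).re; rw [hδ_def]; linarith
    · exact mem_ball_self one_pos
  obtain ⟨ε, hε, hball⟩ := Metric.isOpen_iff.mp hVopen s₀ hs₀V
  have key := hasDerivAt_integral_of_dominated_loc_of_deriv_le (μ := volume.restrict (Ioi 0))
    (F := fun s t => Fi ℓ s t) (F' := fun s t => Fi' ℓ s t)
    (bound := fun t => (2*M) * (Real.sqrt t * Real.exp (-(δ*t)))) (ball_mem_nhds s₀ hε)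
    (Eventually.of_forall (fun s => Fi_meas ℓ s))
    (Fi_integrable ℓ s₀ h2) (Fi'_meas ℓ s₀) ?_ ((sqrt_bound δ hδ).const_mul _)
    (Eventually.of_forall (fun t s _ => Fi_hasDeriv ℓ t s))
  · exact key.2
  · -- bound
    filter_upwards [ae_restrict_mem measurableSet_Ioi] with t ht s hs
    have ht' : (0:ℝ) < t := ht
    have hsV : s ∈ V := hball hs
    have hs2 : δ < (s^2).re := hsV.1
    have hsM : ‖s‖ ≤ M := by
      have := mem_ball_iff_norm.mp hsV.2
      calc ‖s‖ = ‖s₀ + (s - s₀)‖ := by ring_nf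
        _ ≤ ‖s₀‖ + ‖s - s₀‖ := norm_add_le _ _
        _ ≤ M := by rw [hM_def]; linarith
    unfold Fi'
    rw [norm_mul, norm_mul, norm_mul]
    have hre : (-(t:ℂ) * s^2).re = -(t * (s^2).re) := by
      rw [show -(t:ℂ) * s^2 = ((-t : ℝ) : ℂ) * s^2 by push_cast; ring, Complex.re_ofReal_mul]
      ring
    rw [show ‖cexp (-(t:ℂ) * s^2)‖ = Real.exp (-(t * (s^2).re)) by
        rw [Complex.norm_exp, hre],
      Complex.norm_real, Complex.norm_real, Real.norm_eq_abs, Real.norm_eq_abs,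
      _root_.abs_of_nonneg (inv_nonneg.mpr (Real.sqrt_nonneg t)),
      _root_.abs_of_pos (Real.exp_pos _)]
    have hn1 : ‖-(t:ℂ) * (2*s)‖ = t * (2 * ‖s‖) := by
      rw [norm_mul, norm_neg, norm_mul, Complex.norm_real]
      · simp [Real.norm_eq_abs, _root_.abs_of_pos ht', Complex.norm_ofNat]
    rw [hn1]
    have hexp1 : Real.exp (-(t * (s^2).re)) ≤ Real.exp (-(δ*t)) := by
      apply Real.exp_le_exp.mpr
      rw [neg_le_neg_iff]
      calc δ * t = t * δ := by ring
        _ ≤ t * (s^2).re := by nlinarith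
    have hexp2 : Real.exp (-ℓ^2/(4*t)) ≤ 1 := by
      apply Real.exp_le_one_iff.mpr
      rw [neg_div]
      simp only [Left.neg_nonpos_iff]
      positivity
    have hts : t * (Real.sqrt t)⁻¹ = Real.sqrt t := by
      field_simp [(Real.sqrt_pos.mpr ht').ne']
      rw [Real.sq_sqrt ht'.le]
    calc Real.exp (-(t * (s^2).re)) * (t * (2*‖s‖)) * (Real.sqrt t)⁻¹ * Real.exp (-ℓ^2/(4*t))
        ≤ Real.exp (-(δ*t)) * (t * (2*M)) * (Real.sqrt t)⁻¹ * 1 := by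
          apply mul_le_mul ?_ hexp2 (Real.exp_pos _).le (by positivity)
          apply mul_le_mul_of_nonneg_right ?_ (by positivity)
          apply mul_le_mul hexp1 (by nlinarith) (by positivity) (Real.exp_pos _).le
      _ = (2*M) * (t * (Real.sqrt t)⁻¹ * Real.exp (-(δ*t))) := by ring
      _ = (2*M) * (Real.sqrt t * Real.exp (-(δ*t))) := by rw [hts]


noncomputable def Gv (ℓ : ℝ) (s : ℂ) : ℂ :=
  ((Real.sqrt Real.pi : ℝ) : ℂ) / s * Complex.exp (-(ℓ : ℂ) * s)

def Uset : Set ℂ := {s : ℂ | 0 < s.re ∧ 0 < (s^2).re}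

lemma Uset_eq : Uset = {s : ℂ | s.im < s.re} ∩ {s : ℂ | -s.im < s.re} := by
  ext s
  simp only [Uset, mem_setOf_eq, mem_inter_iff]
  have h : (s^2).re = s.re*s.re - s.im*s.im := by rw [sq, Complex.mul_re]
  constructor
  · rintro ⟨h1, h2⟩
    rw [h] at h2
    constructor <;> nlinarith
  · rintro ⟨h1, h2⟩
    have h3 : 0 < s.re := by nlinarith
    refine ⟨h3, ?_⟩
    rw [h]
    nlinarith

lemma Uset_open : IsOpen Uset := by
  apply IsOpen.inter
  · exact isOpen_lt continuous_const Complex.continuous_re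
  · exact isOpen_lt continuous_const (Complex.continuous_re.comp (continuous_pow 2))

lemma Uset_preconnected : IsPreconnected Uset := by
  rw [Uset_eq]
  apply Convex.isPreconnected
  have lin1 : IsLinearMap ℝ (fun s : ℂ => s.re - s.im) :=
    ⟨fun a b => by simp [Complex.add_re, Complex.add_im]; ring,
     fun c a => by simp [Complex.real_smul, Complex.mul_re, Complex.mul_im]; ring⟩
  have lin2 : IsLinearMap ℝ (fun s : ℂ => s.re + s.im) :=
    ⟨fun a b => by simp [Complex.add_re, Complex.add_im]; ring,
     fun c a => by simp [Complex.real_smul, Complex.mul_re, Complex.mul_im]; ring⟩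
  apply Convex.inter
  · have h : {s : ℂ | s.im < s.re} = {s : ℂ | (0:ℝ) < s.re - s.im} := by
      ext s; simp [sub_pos]
    rw [h]
    exact convex_halfSpace_gt lin1 0
  · have h : {s : ℂ | -s.im < s.re} = {s : ℂ | (0:ℝ) < s.re + s.im} := by
      ext s; simp only [mem_setOf_eq]; constructor <;> intro <;> linarith
    rw [h]
    exact convex_halfSpace_gt lin2 0

lemma Fv_eq_Gv_on_real (ℓ : ℝ) (hℓ : 0 < ℓ) (c : ℝ) (hc : 0 < c) :
    ∫ t in Ioi (0:ℝ), Fi ℓ ((c:ℝ):ℂ) t = Gv ℓ ((c:ℝ):ℂ) := by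
  have h1 : ∀ t : ℝ, Fi ℓ (c:ℂ) t
      = ((Real.exp (-(t*c^2)) * (Real.sqrt t)⁻¹ * Real.exp (-ℓ^2/(4*t)) : ℝ) : ℂ) := by
    intro t
    unfold Fi
    rw [show -((t:ℂ)) * ((c:ℂ))^2 = ((-(t*c^2) : ℝ) : ℂ) by push_cast; ring,
      ← Complex.ofReal_exp]
    push_cast
    ring
  simp only [h1]
  have h2 : ∫ t in Ioi (0:ℝ),
      ((Real.exp (-(t*c^2)) * (Real.sqrt t)⁻¹ * Real.exp (-ℓ^2/(4*t)) : ℝ) : ℂ)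
      = ((∫ t in Ioi (0:ℝ),
        Real.exp (-(t*c^2)) * (Real.sqrt t)⁻¹ * Real.exp (-ℓ^2/(4*t)) : ℝ) : ℂ) :=
    integral_ofReal
  rw [h2, real_case ℓ hℓ c hc]
  unfold Gv
  rw [show -((ℓ:ℂ)) * ((c:ℂ)) = ((-(ℓ*c) : ℝ) : ℂ) by push_cast; ring, ← Complex.ofReal_exp]
  push_cast
  ring

lemma Fv_eq_Gv (ℓ : ℝ) (hℓ : 0 < ℓ) (s : ℂ) (hs : 0 < s.re) (hs2 : 0 < (s^2).re) :
    ∫ t in Ioi (0:ℝ), Fi ℓ s t = Gv ℓ s := by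
  have hF : AnalyticOnNhd ℂ (fun s => ∫ t in Ioi (0:ℝ), Fi ℓ s t) Uset := by
    apply DifferentiableOn.analyticOnNhd ?_ Uset_open
    intro z hz
    exact (Fv_hasDeriv ℓ hℓ z hz.2).differentiableAt.differentiableWithinAt
  have hG : AnalyticOnNhd ℂ (Gv ℓ) Uset := by
    apply DifferentiableOn.analyticOnNhd ?_ Uset_open
    intro z hz
    apply DifferentiableAt.differentiableWithinAt
    apply DifferentiableAt.mul
    · apply DifferentiableAt.div (differentiableAt_const _) differentiableAt_id
      intro h
      rw [h] at hz
      exact lt_irrefl 0 (by simpa using hz.1)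
    · exact (Complex.differentiable_exp.comp
        (((differentiable_id (𝕜 := ℂ) (E := ℂ)).const_mul (-(ℓ:ℂ))).comp (differentiable_id (𝕜 := ℂ) (E := ℂ)))).differentiableAt
  have h1 : (1:ℂ) ∈ Uset := by constructor <;> norm_num
  have hfreq : ∃ᶠ z in nhdsWithin (1:ℂ) {(1:ℂ)}ᶜ,
      (∫ t in Ioi (0:ℝ), Fi ℓ z t) = Gv ℓ z := by
    have htend : Tendsto (fun n : ℕ => (((1 + 1/(n+1) : ℝ)) : ℂ)) atTop
        (nhdsWithin (1:ℂ) {(1:ℂ)}ᶜ) := by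
      rw [tendsto_nhdsWithin_iff]
      constructor
      · have hr : Tendsto (fun n : ℕ => (1 + 1/(n+1) : ℝ)) atTop (nhds 1) := by
          have := tendsto_one_div_add_atTop_nhds_zero_nat (𝕜 := ℝ)
          have h2 := this.const_add (1:ℝ)
          simpa using h2
        have := (Complex.continuous_ofReal.tendsto (1:ℝ)).comp hr
        simpa [Function.comp_def] using this
      · apply Eventually.of_forall
        intro n
        simp only [mem_compl_iff, mem_singleton_iff]
        intro h
        have h2 : (1 + 1/(n+1) : ℝ) = 1 := by exact_mod_cast h
        have : (0:ℝ) < 1/(n+1) := by positivity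
        linarith
    apply htend.frequently
    apply Eventually.frequently
    apply Eventually.of_forall
    intro n
    exact Fv_eq_Gv_on_real ℓ hℓ _ (by positivity)
  exact hF.eqOn_of_preconnected_of_frequently_eq hG Uset_preconnected h1 hfreq ⟨hs, hs2⟩

open MeasureTheory in
/-- Subordination identity: for `ℓ > 0` and `s ∈ ℂ` with `Re s > 0` and
`Re(s²) > 0`, the function `t ↦ e^{-t s²} t^{-1/2} e^{-ℓ²/(4t)}` is
integrable on `(0, ∞)` and
`∫₀^∞ e^{-t s²} t^{-1/2} e^{-ℓ²/(4t)} dt = (√π / s) e^{-ℓ s}`. -/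
theorem subordination_identity (ℓ : ℝ) (hℓ : 0 < ℓ) (s : ℂ)
    (hs : 0 < s.re) (hs2 : 0 < (s ^ 2).re) :
    IntegrableOn (fun t : ℝ =>
        Complex.exp (-(t : ℂ) * s ^ 2) * ((Real.sqrt t)⁻¹ : ℝ) *
          (Real.exp (-ℓ ^ 2 / (4 * t)) : ℝ))
      (Set.Ioi (0 : ℝ)) ∧
    ∫ t in Set.Ioi (0 : ℝ),
        Complex.exp (-(t : ℂ) * s ^ 2) * ((Real.sqrt t)⁻¹ : ℝ) *
          (Real.exp (-ℓ ^ 2 / (4 * t)) : ℝ)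
      = ((Real.sqrt Real.pi : ℂ) / s) * Complex.exp (-(ℓ : ℂ) * s) := by
  constructor
  · exact Fi_integrable ℓ s hs2
  · exact Fv_eq_Gv ℓ hℓ s hs hs2
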